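/- arXiv:1803.05470 — 4 statements merged into one kernel-verified Lean document; each statement's English description precedes it below -/
import Mathlib

section
/- For every n ≥ 2, there exist n nonatomic value measures on the interval [0,1] and an entitlement vector t (positive reals summing to 1) such that every t-proportional division of the cake into intervals assigned to agents requires at least 2n−1 intervals in total, i.e., at least 2n−2 cuts. -/
open MeasureTheory Set

noncomputable section

/-- The piece of agent `i` in a division of a cake by `k+1` cut points into `k+1` intervals
(cuts `x`, interval `j` going from `x j` to `x (j+1)`), with `owner` assigning intervals. -/
def piece {n k : ℕ} (x : Fin (k + 2) → ℝ) (owner : Fin (k + 1) → Fin n) (i : Fin n) : Set ℝ :=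
  ⋃ (j : Fin (k + 1)) (_ : owner j = i), Set.Ioc (x j.castSucc) (x j.succ)

/-- `x` is a sequence of cut points dividing the cake `[0,1]`. -/
def IsDivision {k : ℕ} (x : Fin (k + 2) → ℝ) : Prop :=
  Monotone x ∧ x 0 = 0 ∧ x (Fin.last (k + 1)) = 1

namespace CakeLB

/-- `2n - 1`, the number of slots. -/
def dd (n : ℕ) : ℝ := 2 * n - 1

/-- The `j`-th blob (even slot), valued by the big agent. -/
def blob (n j : ℕ) : Set ℝ := Icc ((2 * j : ℝ) / dd n) ((2 * j + 1 : ℝ) / dd n)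

/-- The `i`-th odd slot, valued by small agent `i` (for `1 ≤ i ≤ n-1`). -/
def sslot (n i : ℕ) : Set ℝ := Icc ((2 * i - 1 : ℝ) / dd n) ((2 * i : ℝ) / dd n)

/-- Union of all blobs: support of the big agent. -/
def EE (n : ℕ) : Set ℝ := ⋃ j : Fin n, blob n j

/-- Support of agent `i`. -/
def SS (n : ℕ) (i : Fin n) : Set ℝ := if (i : ℕ) = 0 then EE n else sslot n i

/-- Value measure of agent `i`. -/
def VV (n : ℕ) (i : Fin n) : Measure ℝ := volume.restrict (SS n i)

/-- Entitlements. -/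
def tt (n : ℕ) (i : Fin n) : ℝ :=
  if (i : ℕ) = 0 then 1 - ((n : ℝ) - 1) / (n : ℝ) ^ 2 else 1 / (n : ℝ) ^ 2

variable {n : ℕ}

lemma dd_pos (hn : 2 ≤ n) : 0 < dd n := by
  have : (2 : ℝ) ≤ n := by exact_mod_cast hn
  unfold dd; linarith

lemma measurableSet_EE : MeasurableSet (EE n) :=
  MeasurableSet.iUnion fun _ => measurableSet_Icc

lemma measurableSet_SS (i : Fin n) : MeasurableSet (SS n i) := by
  unfold SS; split
  · exact measurableSet_EE
  · exact measurableSet_Icc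

lemma vol_blob (hn : 2 ≤ n) (j : ℕ) : volume (blob n j) = ENNReal.ofReal (1 / dd n) := by
  unfold blob
  rw [Real.volume_Icc, div_sub_div_same]
  norm_num

lemma vol_sslot (hn : 2 ≤ n) (i : ℕ) : volume (sslot n i) = ENNReal.ofReal (1 / dd n) := by
  unfold sslot
  rw [Real.volume_Icc, div_sub_div_same]
  norm_num

lemma blob_disjoint_aux (hn : 2 ≤ n) {j j' : ℕ} (h : j < j') :
    Disjoint (blob n j) (blob n j') := by
  have hd := dd_pos hn
  have hjj : (2 * (j : ℝ) + 1) / dd n < (2 * (j' : ℝ)) / dd n := by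
    rw [div_lt_div_iff_of_pos_right hd]
    have : (j : ℝ) + 1 ≤ (j' : ℝ) := by exact_mod_cast h
    linarith
  apply Set.disjoint_left.mpr
  intro y hy hy'
  have h1 := hy.2
  have h2 := hy'.1
  unfold blob at *
  simp only [mem_Icc] at hy hy'
  linarith [hy.2, hy'.1]

lemma blob_disjoint (hn : 2 ≤ n) {j j' : ℕ} (h : j ≠ j') :
    Disjoint (blob n j) (blob n j') := by
  rcases h.lt_or_gt with hlt | hlt
  · exact blob_disjoint_aux hn hlt
  · exact (blob_disjoint_aux hn hlt).symm

lemma vol_EE (hn : 2 ≤ n) : volume (EE n) = ENNReal.ofReal ((n : ℝ) / dd n) := by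
  unfold EE
  rw [measure_iUnion (fun j j' hjj' => blob_disjoint hn (fun e => hjj' (Fin.val_injective e)))
    (fun _ => measurableSet_Icc)]
  rw [tsum_fintype]
  simp only [vol_blob hn]
  rw [Finset.sum_const, Finset.card_univ, Fintype.card_fin, nsmul_eq_mul,
    ← ENNReal.ofReal_natCast n, ← ENNReal.ofReal_mul (by positivity)]
  congr 1
  ring

lemma blob_subset (hn : 2 ≤ n) {j : ℕ} (hj : j < n) : blob n j ⊆ Icc 0 1 := by
  have hd := dd_pos hn
  apply Set.Icc_subset_Icc
  · positivity
  · rw [div_le_one hd]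
    have : (j : ℝ) + 1 ≤ (n : ℝ) := by exact_mod_cast hj
    unfold dd; linarith

lemma sslot_subset (hn : 2 ≤ n) {i : ℕ} (h1 : 1 ≤ i) (h2 : i < n) : sslot n i ⊆ Icc 0 1 := by
  have hd := dd_pos hn
  have hi1 : (1 : ℝ) ≤ (i : ℝ) := by exact_mod_cast h1
  have hi2 : (i : ℝ) + 1 ≤ (n : ℝ) := by exact_mod_cast h2
  apply Set.Icc_subset_Icc
  · apply div_nonneg _ hd.le; linarith
  · rw [div_le_one hd]; unfold dd; linarith

lemma SS_subset (hn : 2 ≤ n) (i : Fin n) : SS n i ⊆ Icc 0 1 := by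
  unfold SS; split
  · exact Set.iUnion_subset fun j => blob_subset hn j.isLt
  · next h => exact sslot_subset hn (Nat.one_le_iff_ne_zero.mpr h) i.isLt

lemma VV_cake (hn : 2 ≤ n) (i : Fin n) : VV n i (Icc 0 1) = volume (SS n i) := by
  unfold VV
  rw [Measure.restrict_apply measurableSet_Icc,
    Set.inter_eq_self_of_subset_right (SS_subset hn i)]

lemma VV_cake_small (hn : 2 ≤ n) {i : Fin n} (hi : (i : ℕ) ≠ 0) :
    VV n i (Icc 0 1) = ENNReal.ofReal (1 / dd n) := by
  rw [VV_cake hn, SS, if_neg hi, vol_sslot hn]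

lemma VV_cake_big (hn : 2 ≤ n) {i : Fin n} (hi : (i : ℕ) = 0) :
    VV n i (Icc 0 1) = ENNReal.ofReal ((n : ℝ) / dd n) := by
  rw [VV_cake hn, SS, if_pos hi, vol_EE hn]

lemma tt_pos (hn : 2 ≤ n) (i : Fin n) : 0 < tt n i := by
  have h2 : (2 : ℝ) ≤ (n : ℝ) := by exact_mod_cast hn
  unfold tt; split
  · have hlt : ((n : ℝ) - 1) / (n : ℝ) ^ 2 < 1 := by
      rw [div_lt_one (by positivity)]
      nlinarith
    linarith
  · positivity

lemma aux_pos {u v a b : ℝ} (h : volume (Ioc u v ∩ Icc a b) ≠ 0) : u < b ∧ a < v := by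
  constructor
  · by_contra hc
    push_neg at hc
    apply h
    have he : Ioc u v ∩ Icc a b = ∅ := by
      ext y
      simp only [mem_inter_iff, mem_Ioc, mem_Icc, mem_empty_iff_false, iff_false, not_and,
        and_imp]
      intro h1 _ _ h4
      linarith
    rw [he, measure_empty]
  · by_contra hc
    push_neg at hc
    apply h
    have hsub : Ioc u v ∩ Icc a b ⊆ {a} := by
      rintro y ⟨⟨_, h2⟩, ⟨h3, _⟩⟩
      have : y = a := le_antisymm (h2.trans hc) h3
      simp [this]
    exact measure_mono_null hsub Real.volume_singleton

lemma interval_disjoint {k : ℕ} {x : Fin (k + 2) → ℝ} (hx : Monotone x)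
    {l m : Fin (k + 1)} (h : l ≠ m) :
    Ioc (x l.castSucc) (x l.succ) ∩ Ioc (x m.castSucc) (x m.succ) = ∅ := by
  wlog hlt : l < m generalizing l m
  · rw [Set.inter_comm]
    exact this h.symm (h.lt_or_gt.resolve_left hlt)
  have hle : x l.succ ≤ x m.castSucc := by
    apply hx
    rw [Fin.le_def]
    simp only [Fin.val_succ, Fin.coe_castSucc]
    exact Fin.lt_def.mp hlt
  ext y
  simp only [mem_inter_iff, mem_Ioc, mem_empty_iff_false, iff_false, not_and, and_imp]
  intro _ h2 h3 _
  linarith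

end CakeLB

open CakeLB

/-- For every `n ≥ 2` there are `n` nonatomic value measures on `[0,1]` and an entitlement
vector `t` such that every `t`-proportional division requires at least `2n - 2` cuts. -/
theorem lower_bound_two_n_minus_two_cuts (n : ℕ) (hn : 2 ≤ n) :
    ∃ (V : Fin n → Measure ℝ) (t : Fin n → ℝ),
      (∀ i, IsFiniteMeasure (V i)) ∧ (∀ i, NoAtoms (V i)) ∧
      (∀ i, V i ((Icc (0:ℝ) 1)ᶜ) = 0) ∧ (∀ i, 0 < V i (Icc (0:ℝ) 1)) ∧
      (∀ i, 0 < t i) ∧ (∑ i, t i) = 1 ∧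
      ∀ (k : ℕ) (x : Fin (k + 2) → ℝ) (owner : Fin (k + 1) → Fin n),
        IsDivision x →
        (∀ i, ENNReal.ofReal (t i) * V i (Icc (0:ℝ) 1) ≤ V i (piece x owner i)) →
        2 * n - 2 ≤ k := by
  have h2 : (2 : ℝ) ≤ (n : ℝ) := by exact_mod_cast hn
  have hd := dd_pos hn
  have hd1 : (0 : ℝ) < 1 / dd n := by positivity
  set z : Fin n := ⟨0, by omega⟩ with hzdef
  refine ⟨VV n, tt n, ?_, ?_, ?_, ?_, ?_, ?_, ?_⟩
  · -- finite
    intro i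
    constructor
    rw [VV, Measure.restrict_apply_univ]
    calc volume (SS n i) ≤ volume (Icc (0:ℝ) 1) := measure_mono (SS_subset hn i)
      _ < ⊤ := by rw [Real.volume_Icc]; exact ENNReal.ofReal_lt_top
  · -- no atoms
    intro i
    unfold VV
    exact (inferInstance : NullSingletonClass (volume.restrict (SS n i)))
  · -- concentrated on [0,1]
    intro i
    rw [VV, Measure.restrict_apply measurableSet_Icc.compl]
    have : (Icc (0:ℝ) 1)ᶜ ∩ SS n i = ∅ := by
      ext y
      simp only [mem_inter_iff, mem_compl_iff, mem_empty_iff_false, iff_false, not_and]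
      intro hy hy2
      exact hy (SS_subset hn i hy2)
    rw [this, measure_empty]
  · -- positive total value
    intro i
    rcases eq_or_ne (i : ℕ) 0 with hi | hi
    · rw [VV_cake_big hn hi]
      apply ENNReal.ofReal_pos.mpr
      positivity
    · rw [VV_cake_small hn hi]
      exact ENNReal.ofReal_pos.mpr hd1
  · exact tt_pos hn
  · -- sum of entitlements
    rw [← Finset.sum_erase_add _ _ (Finset.mem_univ z)]
    have hco : ∀ i ∈ Finset.univ.erase z, tt n i = 1 / (n : ℝ) ^ 2 := by
      intro i hi
      have hine : i ≠ z := (Finset.mem_erase.mp hi).1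
      have : (i : ℕ) ≠ 0 := fun e => hine (Fin.ext e)
      rw [tt, if_neg this]
    rw [Finset.sum_congr rfl hco, Finset.sum_const,
      Finset.card_erase_of_mem (Finset.mem_univ z), Finset.card_univ, Fintype.card_fin,
      nsmul_eq_mul, tt, if_pos rfl]
    have hcast : ((n - 1 : ℕ) : ℝ) = (n : ℝ) - 1 := by
      have : 1 ≤ n := by omega
      push_cast [this]
      ring
    rw [hcast]
    have hn0 : (n : ℝ) ≠ 0 := by linarith
    field_simp
    ring
  · -- main lower bound
    intro k x owner hdiv hprop
    obtain ⟨hx, -, -⟩ := hdiv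
    -- measurability of pieces
    have hMp : ∀ i, MeasurableSet (piece x owner i) := fun i =>
      MeasurableSet.iUnion fun j => MeasurableSet.iUnion fun _ => measurableSet_Ioc
    have hVp : ∀ i, VV n i (piece x owner i) = volume (piece x owner i ∩ SS n i) := fun i =>
      Measure.restrict_apply (hMp i)
    -- a small agent whose slot is swallowed by an interval of another agent is dead
    have hkill : ∀ (m : Fin (k + 1)) (i : Fin n), (i : ℕ) ≠ 0 → owner m ≠ i →
        sslot n i ⊆ Ioc (x m.castSucc) (x m.succ) → False := by
      intro m i hi hom hsub
      have hempty : piece x owner i ∩ SS n i = ∅ := by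
        rw [SS, if_neg hi]
        apply Set.eq_empty_iff_forall_notMem.mpr
        rintro y ⟨hy1, hy2⟩
        simp only [piece, mem_iUnion] at hy1
        obtain ⟨l, hl, hyl⟩ := hy1
        have hlm : l ≠ m := fun e => hom (e ▸ hl)
        have hdisj := interval_disjoint hx hlm
        exact absurd (Set.mem_inter hyl (hsub hy2)) (by rw [hdisj]; exact notMem_empty y)
      have h0 : VV n i (piece x owner i) = 0 := by
        rw [hVp i, hempty, measure_empty]
      have hge := hprop i
      rw [h0] at hge
      have hne : ENNReal.ofReal (tt n i) * VV n i (Icc 0 1) ≠ 0 := by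
        apply mul_ne_zero
        · exact ne_of_gt (ENNReal.ofReal_pos.mpr (tt_pos hn i))
        · rw [VV_cake_small hn hi]
          exact ne_of_gt (ENNReal.ofReal_pos.mpr hd1)
      exact hne (le_antisymm hge zero_le)
    -- an interval of the big agent cannot meet two distinct blobs
    have htwo : ∀ (m : Fin (k + 1)), owner m = z → ∀ (j j' : ℕ), j < j' → j' < n →
        volume (Ioc (x m.castSucc) (x m.succ) ∩ blob n j) ≠ 0 →
        volume (Ioc (x m.castSucc) (x m.succ) ∩ blob n j') ≠ 0 → False := by
      intro m hom j j' hjj' hj'n hv hv'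
      obtain ⟨hub, -⟩ := aux_pos hv
      obtain ⟨-, hlb⟩ := aux_pos hv'
      set i : Fin n := ⟨j + 1, by omega⟩ with hidef
      have hiv : (i : ℕ) = j + 1 := rfl
      apply hkill m i (by omega)
      · intro e
        have := congrArg Fin.val e
        rw [hiv] at this
        rw [hom] at e
        have : (z : ℕ) = j + 1 := by rw [e]
        simp [hzdef] at this
      · intro y hy
        obtain ⟨hy1, hy2⟩ := hy
        rw [hiv] at hy1 hy2
        push_cast at hy1 hy2
        constructor
        · have heq : (2 * ((j : ℝ) + 1) - 1) / dd n = (2 * (j : ℝ) + 1) / dd n := by ring_nf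
          rw [heq] at hy1
          exact lt_of_lt_of_le hub hy1
        · have hcj : (j : ℝ) + 1 ≤ (j' : ℝ) := by exact_mod_cast hjj'
          have hstep : (2 * ((j : ℝ) + 1)) / dd n ≤ (2 * (j' : ℝ)) / dd n := by
            rw [div_le_div_iff_of_pos_right hd]
            linarith
          linarith
    -- the big agent's piece meets every blob
    have hall : ∀ j : Fin n, volume (piece x owner z ∩ blob n (j : ℕ)) ≠ 0 := by
      intro j h0
      have hprop0 := hprop z
      rw [VV_cake_big hn rfl, hVp z] at hprop0
      have hSz : SS n z = EE n := by rw [SS, if_pos rfl]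
      rw [hSz] at hprop0
      have hblobE : blob n (j : ℕ) ⊆ EE n := Set.subset_iUnion (fun jj : Fin n => blob n jj) j
      have hub : volume (piece x owner z ∩ EE n) ≤ ENNReal.ofReal (((n : ℝ) - 1) / dd n) := by
        have hsub : piece x owner z ∩ EE n ⊆
            (EE n \ blob n (j : ℕ)) ∪ (piece x owner z ∩ blob n (j : ℕ)) := by
          rintro y ⟨hy1, hy2⟩
          by_cases hyb : y ∈ blob n (j : ℕ)
          · exact Or.inr ⟨hy1, hyb⟩
          · exact Or.inl ⟨hy2, hyb⟩
        calc volume (piece x owner z ∩ EE n)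
            ≤ volume (EE n \ blob n (j : ℕ)) + volume (piece x owner z ∩ blob n (j : ℕ)) :=
              (measure_mono hsub).trans (measure_union_le _ _)
          _ = volume (EE n \ blob n (j : ℕ)) := by rw [h0, add_zero]
          _ = ENNReal.ofReal (((n : ℝ) - 1) / dd n) := by
              rw [measure_diff hblobE measurableSet_Icc.nullMeasurableSet
                (by rw [vol_blob hn]; exact ENNReal.ofReal_ne_top),
                vol_EE hn, vol_blob hn, ← ENNReal.ofReal_sub _ hd1.le, div_sub_div_same]
      have hle : ENNReal.ofReal (tt n z * ((n : ℝ) / dd n)) ≤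
          ENNReal.ofReal (((n : ℝ) - 1) / dd n) := by
        rw [ENNReal.ofReal_mul (le_of_lt (tt_pos hn z))]
        exact le_trans hprop0 hub
      have hreal : tt n z * ((n : ℝ) / dd n) ≤ ((n : ℝ) - 1) / dd n :=
        (ENNReal.ofReal_le_ofReal_iff (div_nonneg (by linarith) hd.le)).mp hle
      have hkey : ((n : ℝ) - 1) < tt n z * (n : ℝ) := by
        rw [tt, if_pos rfl]
        have hn0 : (0 : ℝ) < (n : ℝ) := by linarith
        have hexp : (1 - ((n : ℝ) - 1) / (n : ℝ) ^ 2) * (n : ℝ) = (n : ℝ) - ((n : ℝ) - 1) / (n : ℝ) := by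
          field_simp
        rw [hexp]
        have : ((n : ℝ) - 1) / (n : ℝ) < 1 := by
          rw [div_lt_one hn0]; linarith
        linarith
      have h5 : ((n : ℝ) - 1) / dd n < (tt n z * (n : ℝ)) / dd n :=
        (div_lt_div_iff_of_pos_right hd).mpr hkey
      rw [mul_div_assoc] at h5
      linarith
    -- choose a witness interval of the big agent in each blob
    have hchoose : ∀ j : Fin n, ∃ m : Fin (k + 1), owner m = z ∧
        volume (Ioc (x m.castSucc) (x m.succ) ∩ blob n (j : ℕ)) ≠ 0 := by
      intro j
      by_contra hc
      push_neg at hc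
      apply hall j
      have hun : piece x owner z ∩ blob n (j : ℕ) =
          ⋃ m, ⋃ (_ : owner m = z), (Ioc (x m.castSucc) (x m.succ) ∩ blob n (j : ℕ)) := by
        simp only [piece, Set.iUnion_inter]
      rw [hun, measure_iUnion_null_iff]
      intro m
      rw [measure_iUnion_null_iff]
      intro hm
      exact hc m hm
    -- each small agent owns some interval
    have hsm : ∀ i : Fin n, (i : ℕ) ≠ 0 → ∃ m, owner m = i := by
      intro i hi
      by_contra hc
      push_neg at hc
      have hempty : piece x owner i = ∅ := by
        apply Set.eq_empty_iff_forall_notMem.mpr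
        intro y hy
        simp only [piece, mem_iUnion] at hy
        obtain ⟨m, hm, -⟩ := hy
        exact hc m hm
      have h0 : VV n i (piece x owner i) = 0 := by
        rw [hempty]
        simp
      have hge := hprop i
      rw [h0] at hge
      have hne : ENNReal.ofReal (tt n i) * VV n i (Icc 0 1) ≠ 0 := by
        apply mul_ne_zero
        · exact ne_of_gt (ENNReal.ofReal_pos.mpr (tt_pos hn i))
        · rw [VV_cake_small hn hi]
          exact ne_of_gt (ENNReal.ofReal_pos.mpr hd1)
      exact hne (le_antisymm hge zero_le)
    -- build the injection
    let g : Fin n → Fin (k + 1) := fun j => (hchoose j).choose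
    have hg1 : ∀ j, owner (g j) = z := fun j => (hchoose j).choose_spec.1
    have hg2 : ∀ j, volume (Ioc (x (g j).castSucc) (x (g j).succ) ∩ blob n (j : ℕ)) ≠ 0 :=
      fun j => (hchoose j).choose_spec.2
    let fa : Fin (n - 1) → Fin n := fun i => ⟨(i : ℕ) + 1, by omega⟩
    have hfa : ∀ i, ((fa i : Fin n) : ℕ) ≠ 0 := fun i => by simp [fa]
    let h : Fin (n - 1) → Fin (k + 1) := fun i => (hsm (fa i) (hfa i)).choose
    have hh : ∀ i, owner (h i) = fa i := fun i => (hsm (fa i) (hfa i)).choose_spec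
    have hginj : Function.Injective g := by
      intro j j' he
      by_contra hne
      have hvne : (j : ℕ) ≠ (j' : ℕ) := fun e => hne (Fin.ext e)
      rcases hvne.lt_or_gt with hlt | hlt
      · exact htwo (g j) (hg1 j) j j' hlt j'.isLt (hg2 j) (by rw [he]; exact hg2 j')
      · exact htwo (g j) (hg1 j) j' j hlt j.isLt (by rw [he]; exact hg2 j') (hg2 j)
    have hFinj : Function.Injective (Sum.elim g h) := by
      rintro (ja | ia) (jb | ib) hab <;>
        simp only [Sum.elim_inl, Sum.elim_inr] at hab
      · exact congrArg Sum.inl (hginj hab)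
      · exfalso
        have e1 := hg1 ja
        rw [show g ja = h ib from hab, hh ib] at e1
        have := congrArg Fin.val e1
        simp [fa, hzdef] at this
      · exfalso
        have e1 := hg1 jb
        rw [show g jb = h ia from hab.symm, hh ia] at e1
        have := congrArg Fin.val e1
        simp [fa, hzdef] at this
      · have e1 : fa ia = fa ib := by rw [← hh ia, ← hh ib, hab]
        have e2 := congrArg Fin.val e1
        simp only [fa] at e2
        exact congrArg Sum.inr (Fin.ext (by omega))
    have hcard := Fintype.card_le_of_injective (Sum.elim g h) hFinj
    simp only [Fintype.card_sum, Fintype.card_fin] at hcard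
    omega
end
end

section
/- Let f(n) = 2n·log₂(n̂) − 2n̂ + 2 where n̂ = 2^⌈log₂ n⌉. Then for every n ≥ 2, with n_A = ⌊n/2⌋ and n_B = ⌈n/2⌉, we have (2n − 2) + f(n_A) + f(n_B) ≤ f(n), using that the rounded-up powers of two satisfy n̂_A ≤ n̂/2 and n̂_B ≤ n̂/2. -/
noncomputable section

/-- `f m = 2 m log₂ m̂ - 2 m̂ + 2`, where `m̂ = 2 ^ ⌈log₂ m⌉` is `m` rounded up to the
nearest power of two (so `log₂ m̂ = ⌈log₂ m⌉ = Nat.clog 2 m`). Valued in `ℤ`. -/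
def f (m : ℕ) : ℤ :=
  2 * m * Nat.clog 2 m - 2 * 2 ^ (Nat.clog 2 m) + 2

/-- The recursion for the upper bound: for `n ≥ 2`, with `n_A = ⌊n/2⌋`, `n_B = ⌈n/2⌉`,
`(2n - 2) + f(n_A) + f(n_B) ≤ f n`. -/
theorem f_recursion (n : ℕ) (hn : 2 ≤ n) :
    (2 * (n:ℤ) - 2) + f (n / 2) + f (n - n / 2) ≤ f n := by
  -- small cases
  rcases eq_or_lt_of_le hn with h2 | hn3
  · subst_vars; simp [f]; norm_num [Nat.clog]
  rcases eq_or_lt_of_le (show 3 ≤ n from hn3) with h3 | hn4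
  · rw [← h3]; simp [f]; norm_num [Nat.clog]
  have hn4 : 4 ≤ n := hn4
  set a := n / 2 with ha
  set b := n - n / 2 with hb
  have hab : n = a + b := by omega
  have ha2 : 2 ≤ a := by omega
  have hb2 : 2 ≤ b := by omega
  have hba : b ≤ a + 1 := by omega
  have hab' : a ≤ b := by omega
  -- recurrence for clog
  have hrec : Nat.clog 2 n = Nat.clog 2 b + 1 := by
    rw [Nat.clog_of_two_le one_lt_two hn]
    congr 2
    omega
  set k := Nat.clog 2 n with hk
  set j := Nat.clog 2 a with hj
  have hjk : j ≤ Nat.clog 2 b := Nat.clog_mono_right 2 hab'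
  have hbub : b ≤ 2 ^ (Nat.clog 2 b) := Nat.le_pow_clog one_lt_two b
  have hblb : 2 ^ (Nat.clog 2 b).pred < b := Nat.pow_pred_clog_lt_self one_lt_two hb2
  have haub : a ≤ 2 ^ j := Nat.le_pow_clog one_lt_two a
  have hkb2 : 1 ≤ Nat.clog 2 b := Nat.clog_pos one_lt_two hb2
  -- a ≥ 2 ^ (clog 2 b - 1), so j ≥ clog 2 b - 1
  have halb : 2 ^ ((Nat.clog 2 b) - 1) ≤ a := by
    have : 2 ^ ((Nat.clog 2 b) - 1) < b := by
      simpa [Nat.pred_eq_sub_one] using hblb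
    omega
  have hjlb : Nat.clog 2 b - 1 ≤ j := by
    have := Nat.clog_mono_right 2 halb
    rwa [Nat.clog_pow 2 _ one_lt_two] at this
  -- cases: j = clog 2 b or j = clog 2 b - 1
  set m := Nat.clog 2 b - 1 with hm
  have hkm : k = m + 2 := by omega
  have hkbm : Nat.clog 2 b = m + 1 := by omega
  have hcases : j = m + 1 ∨ j = m := by omega
  simp only [f, ← hk, ← hj, hkbm, hkm]
  rcases hcases with hc | hc
  · rw [hc]
    push_cast [hab]
    ring_nf
    nlinarith [pow_pos (by norm_num : (0:ℤ) < 2) m]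
  · -- then a = 2 ^ m exactly
    have haeq : a = 2 ^ m := by
      have : a ≤ 2 ^ m := by rwa [hc] at haub
      omega
    rw [hc]
    push_cast [hab, haeq]
    ring_nf
    nlinarith [pow_pos (by norm_num : (0:ℤ) < 2) m]
end
end

section
/- For n = 2 agents with nonatomic probability measures V_1, V_2 on [0,1] and entitlements t_1, t_2 > 0 with t_1 + t_2 = 1, there exists a t-proportional allocation using at most 2 cuts (i.e., a partition of [0,1] into at most 3 intervals assigned to the two agents such that each agent i receives total value at least t_i). -/
open MeasureTheory Set

noncomputable section

theorem quantile_val (μ : Measure ℝ) [IsProbabilityMeasure μ] [NullSingletonClass μ]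
    (hμ1 : μ (Ioc (0:ℝ) 1) = 1) (s : ℝ) (hs0 : 0 ≤ s) (hs1 : s ≤ 1) :
    μ (Ioc 0 (sInf {x | x ∈ Icc (0:ℝ) 1 ∧ s ≤ (μ (Ioc 0 x)).toReal})) = ENNReal.ofReal s := by
  set F : ℝ → ℝ := fun x => (μ (Ioc 0 x)).toReal with hF
  set S : Set ℝ := {x | x ∈ Icc (0:ℝ) 1 ∧ s ≤ F x} with hS
  have hF1 : F 1 = 1 := by simp [hF, hμ1]
  have hSne : S.Nonempty := ⟨1, by simp [hS], by rw [hF1]; exact hs1⟩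
  have hSbdd : BddBelow S := ⟨0, fun x hx => hx.1.1⟩
  set c : ℝ := sInf S with hc
  have hc0 : 0 ≤ c := le_csInf hSne fun x hx => hx.1.1
  have hc1 : c ≤ 1 := csInf_le hSbdd ⟨by simp, by rw [hF1]; exact hs1⟩
  have hofF : ∀ x, μ (Ioc 0 x) = ENNReal.ofReal (F x) := fun x =>
    (ENNReal.ofReal_toReal (measure_ne_top μ _)).symm
  have hdiv : ∀ n m : ℕ, n ≤ m → (1:ℝ)/(m+1) ≤ 1/(n+1) := by
    intro n m hnm
    apply one_div_le_one_div_of_le (by positivity)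
    have := (Nat.cast_le (α := ℝ)).mpr hnm
    linarith
  apply le_antisymm
  · -- μ (Ioc 0 c) ≤ ofReal s
    have h1 : μ (Ioc 0 c) ≤ μ (Ioo 0 c) + μ {c} := by
      refine le_trans (measure_mono ?_) (measure_union_le _ _)
      intro y hy
      rcases eq_or_lt_of_le hy.2 with h | h
      · exact Or.inr (by simp [h])
      · exact Or.inl ⟨hy.1, h⟩
    rw [measure_singleton, add_zero] at h1
    refine le_trans h1 ?_
    have hU : Ioo 0 c = ⋃ n : ℕ, Ioc 0 (c - 1/(n+1)) := by
      ext y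
      simp only [mem_Ioo, mem_iUnion, mem_Ioc]
      constructor
      · rintro ⟨hy0, hyc⟩
        obtain ⟨n, hn⟩ := exists_nat_one_div_lt (sub_pos.mpr hyc)
        exact ⟨n, hy0, by linarith⟩
      · rintro ⟨n, hy0, hyn⟩
        have : (0:ℝ) < 1/(n+1) := by positivity
        exact ⟨hy0, by linarith⟩
    have hmono : Monotone (fun n : ℕ => Ioc (0:ℝ) (c - 1/(n+1))) := by
      intro n m hnm
      exact Ioc_subset_Ioc_right (by linarith [hdiv n m hnm])
    rw [hU, hmono.measure_iUnion]
    refine iSup_le fun n => ?_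
    rcases le_or_gt (c - 1/(n+1)) 0 with h | h
    · have he : Ioc (0:ℝ) (c - 1/(n+1)) = ∅ := Ioc_eq_empty (not_lt.mpr h)
      rw [he]; simp
    · have hpos : (0:ℝ) < 1/(n+1) := by positivity
      have hy : c - 1/(n+1) ∉ S := fun hmem => by
        have := csInf_le hSbdd hmem
        rw [← hc] at this
        linarith
      have hlt : F (c - 1/(n+1)) < s := by
        by_contra hcon
        push_neg at hcon
        exact hy ⟨⟨h.le, by linarith⟩, hcon⟩
      rw [hofF]
      exact ENNReal.ofReal_le_ofReal hlt.le
  · -- ofReal s ≤ μ (Ioc 0 c)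
    have hI : Ioc 0 c = ⋂ n : ℕ, Ioc 0 (c + 1/(n+1)) := by
      ext y
      simp only [mem_Ioc, mem_iInter]
      constructor
      · rintro ⟨hy0, hyc⟩ n
        have : (0:ℝ) < 1/(n+1) := by positivity
        exact ⟨hy0, by linarith⟩
      · intro h
        refine ⟨(h 0).1, ?_⟩
        by_contra hcon
        push_neg at hcon
        obtain ⟨n, hn⟩ := exists_nat_one_div_lt (sub_pos.mpr hcon)
        have := (h n).2
        linarith
    have hanti : Antitone (fun n : ℕ => Ioc (0:ℝ) (c + 1/(n+1))) := by
      intro n m hnm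
      exact Ioc_subset_Ioc_right (by linarith [hdiv n m hnm])
    have heq : μ (⋂ n : ℕ, Ioc (0:ℝ) (c + 1/(n+1))) = ⨅ n : ℕ, μ (Ioc (0:ℝ) (c + 1/(n+1))) :=
      hanti.measure_iInter (fun n => measurableSet_Ioc.nullMeasurableSet)
        ⟨0, measure_ne_top μ _⟩
    rw [hI, heq]
    refine le_iInf fun n => ?_
    have hpos : (0:ℝ) < 1/(n+1) := by positivity
    obtain ⟨x, hxS, hxlt⟩ := (csInf_lt_iff hSbdd hSne).mp (by rw [← hc]; linarith : sInf S < c + 1/(n+1))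
    calc ENNReal.ofReal s ≤ ENNReal.ofReal (F x) := ENNReal.ofReal_le_ofReal hxS.2
      _ = μ (Ioc 0 x) := (hofF x).symm
      _ ≤ _ := measure_mono (Ioc_subset_Ioc_right hxlt.le)

theorem exists_arc (μ ν : Measure ℝ) [IsProbabilityMeasure μ] [IsProbabilityMeasure ν]
    [NullSingletonClass μ] [NullSingletonClass ν] (hμ1 : μ (Ioc (0:ℝ) 1) = 1) (hν1 : ν (Ioc (0:ℝ) 1) = 1)
    (hqval : ∀ s : ℝ, 0 ≤ s → s ≤ 1 →
      μ (Ioc 0 (sInf {x | x ∈ Icc (0:ℝ) 1 ∧ s ≤ (μ (Ioc 0 x)).toReal})) = ENNReal.ofReal s)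
    (p : ℝ) (hp0 : 0 < p) (hp1 : p < 1) :
    ∃ a b : ℝ, 0 ≤ a ∧ a ≤ b ∧ b ≤ 1 ∧
      ((ENNReal.ofReal p ≤ μ (Ioc a b) ∧ ENNReal.ofReal (1-p) ≤ ν (Ioc 0 a ∪ Ioc b 1)) ∨
       (ENNReal.ofReal p ≤ μ (Ioc 0 a ∪ Ioc b 1) ∧ ENNReal.ofReal (1-p) ≤ ν (Ioc a b))) := by
  classical
  set q : ℝ → ℝ := fun s => sInf {x | x ∈ Icc (0:ℝ) 1 ∧ s ≤ (μ (Ioc 0 x)).toReal} with hqdef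
  have hF1 : (μ (Ioc (0:ℝ) 1)).toReal = 1 := by rw [hμ1]; simp
  have hSbdd : ∀ s : ℝ, BddBelow {x | x ∈ Icc (0:ℝ) 1 ∧ s ≤ (μ (Ioc 0 x)).toReal} :=
    fun s => ⟨0, fun x hx => hx.1.1⟩
  have hSne : ∀ s : ℝ, s ≤ 1 → {x | x ∈ Icc (0:ℝ) 1 ∧ s ≤ (μ (Ioc 0 x)).toReal}.Nonempty :=
    fun s hs => ⟨1, by simp, by rw [hF1]; exact hs⟩
  have hq0 : ∀ s : ℝ, s ≤ 1 → 0 ≤ q s := fun s hs => le_csInf (hSne s hs) fun x hx => hx.1.1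
  have hq1 : ∀ s : ℝ, s ≤ 1 → q s ≤ 1 := fun s hs =>
    csInf_le (hSbdd s) ⟨by simp, by rw [hF1]; exact hs⟩
  have hqmono : ∀ s s' : ℝ, s ≤ s' → s' ≤ 1 → q s ≤ q s' := fun s s' hss' hs' =>
    csInf_le_csInf (hSbdd s) (hSne s' hs') fun x hx => ⟨hx.1, le_trans hss' hx.2⟩
  set G : ℝ → ℝ := fun x => (ν (Ioc 0 x)).toReal with hGdef
  set H : ℝ → ℝ := fun s => G (q s) with hHdef
  have hGmono : Monotone G := fun x y hxy =>
    ENNReal.toReal_mono (measure_ne_top ν _) (measure_mono (Ioc_subset_Ioc_right hxy))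
  have hG1 : G 1 = 1 := by rw [hGdef]; simp only; rw [hν1]; simp
  have hHmono : MonotoneOn H (Icc (0:ℝ) 1) := fun s hs s' hs' hss' =>
    hGmono (hqmono s s' hss' hs'.2)
  have hadd : ∀ (ρ : Measure ℝ) (u v w : ℝ), u ≤ v → v ≤ w →
      ρ (Ioc u v) + ρ (Ioc v w) = ρ (Ioc u w) := fun ρ u v w h1 h2 => by
    rw [← measure_union (Ioc_disjoint_Ioc_of_le le_rfl) measurableSet_Ioc, Ioc_union_Ioc_eq_Ioc h1 h2]
  have hIoc : ∀ a b : ℝ, 0 ≤ a → a ≤ b → (ν (Ioc a b)).toReal = G b - G a := by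
    intro a b h0a hab
    have := hadd ν 0 a b h0a hab
    have h2 : G b = G a + (ν (Ioc a b)).toReal := by
      rw [hGdef]; simp only
      rw [← this, ENNReal.toReal_add (measure_ne_top ν _) (measure_ne_top ν _)]
    linarith
  -- the arc value function
  set f : ℝ → ℝ := fun θ =>
    (ν (if θ + p ≤ 1 then Ioc (q θ) (q (θ+p)) else Ioc 0 (q (θ+(p-1))) ∪ Ioc (q θ) 1)).toReal
    with hfdef
  have hp1' : (0:ℝ) ≤ 1 - p := by linarith
  -- formula on [0, 1-p]
  have hf1 : ∀ θ ∈ Icc (0:ℝ) (1-p), f θ = H (θ+p) - H θ := by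
    intro θ hθ
    rw [hfdef]; simp only
    rw [if_pos (by linarith [hθ.2])]
    exact hIoc _ _ (hq0 θ (by linarith [hθ.2])) (hqmono θ (θ+p) (by linarith) (by linarith [hθ.2]))
  -- formula on (1-p, 1]
  have hf2 : ∀ θ ∈ Ioc (1-p) (1:ℝ), f θ = H (θ+(p-1)) + (1 - H θ) := by
    intro θ hθ
    have hθ1 : θ ≤ 1 := hθ.2
    have hw : ¬ (θ + p ≤ 1) := by linarith [hθ.1]
    have harg0 : 0 ≤ θ+(p-1) := by linarith [hθ.1]
    have harg1 : θ+(p-1) ≤ 1 := by linarith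
    have hab : q (θ+(p-1)) ≤ q θ := hqmono _ _ (by linarith) hθ1
    rw [hfdef]; simp only
    rw [if_neg hw]
    have hdisj : Disjoint (Ioc (0:ℝ) (q (θ+(p-1)))) (Ioc (q θ) 1) :=
      Ioc_disjoint_Ioc.mpr (min_le_of_left_le (le_max_of_le_right hab))
    rw [measure_union hdisj measurableSet_Ioc,
      ENNReal.toReal_add (measure_ne_top ν _) (measure_ne_top ν _)]
    have h1 : (ν (Ioc 0 (q (θ+(p-1))))).toReal = H (θ+(p-1)) := rfl
    have h2 : (ν (Ioc (q θ) 1)).toReal = 1 - H θ := by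
      rw [hIoc _ _ (hq0 θ hθ1) (hq1 θ hθ1), hG1]
    rw [h1, h2]
  -- integrability pieces
  have huIcc1 : uIcc (0:ℝ) (1-p) = Icc 0 (1-p) := uIcc_of_le hp1'
  have huIcc2 : uIcc (1-p) (1:ℝ) = Icc (1-p) 1 := uIcc_of_le (by linarith)
  have hHint : ∀ a b : ℝ, 0 ≤ a → a ≤ b → b ≤ 1 → IntervalIntegrable H volume a b := by
    intro a b h0 h1 h2
    exact ((hHmono.mono (by rw [uIcc_of_le h1]; exact Icc_subset_Icc h0 h2))).intervalIntegrable
  have hcomp1 : IntervalIntegrable (fun θ => H (θ+p)) volume 0 (1-p) := by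
    apply MonotoneOn.intervalIntegrable
    rw [huIcc1]
    intro x hx y hy hxy
    exact hHmono ⟨by linarith [hx.1], by linarith [hx.2]⟩ ⟨by linarith [hy.1], by linarith [hy.2]⟩
      (by linarith)
  have hcomp2 : IntervalIntegrable (fun θ => H (θ+(p-1))) volume (1-p) 1 := by
    apply MonotoneOn.intervalIntegrable
    rw [huIcc2]
    intro x hx y hy hxy
    exact hHmono ⟨by linarith [hx.1], by linarith [hx.2]⟩ ⟨by linarith [hy.1], by linarith [hy.2]⟩
      (by linarith)
  have hg1int : IntervalIntegrable (fun θ => H (θ+p) - H θ) volume 0 (1-p) :=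
    hcomp1.sub (hHint 0 (1-p) le_rfl hp1' (by linarith))
  have hg2int : IntervalIntegrable (fun θ => H (θ+(p-1)) + (1 - H θ)) volume (1-p) 1 :=
    hcomp2.add (intervalIntegrable_const.sub (hHint (1-p) 1 hp1' (by linarith) le_rfl))
  have hae1 : ∀ᵐ θ ∂(volume : Measure ℝ), θ ∈ Set.uIoc (0:ℝ) (1-p) → (fun θ => H (θ+p) - H θ) θ = f θ := by
    refine Filter.Eventually.of_forall fun θ hθ => ?_
    rw [uIoc_of_le hp1'] at hθ
    exact (hf1 θ (Ioc_subset_Icc_self hθ)).symm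
  have hae2 : ∀ᵐ θ ∂(volume : Measure ℝ), θ ∈ Set.uIoc (1-p) (1:ℝ) →
      (fun θ => H (θ+(p-1)) + (1 - H θ)) θ = f θ := by
    refine Filter.Eventually.of_forall fun θ hθ => ?_
    rw [uIoc_of_le (by linarith : (1:ℝ)-p ≤ 1)] at hθ
    exact (hf2 θ hθ).symm
  have hfint1 : IntervalIntegrable f volume 0 (1-p) :=
    hg1int.congr_ae ((ae_restrict_iff' measurableSet_uIoc).mpr hae1)
  have hfint2 : IntervalIntegrable f volume (1-p) 1 :=
    hg2int.congr_ae ((ae_restrict_iff' measurableSet_uIoc).mpr hae2)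
  -- integral computations
  have hshift1 : (∫ θ in (0:ℝ)..(1-p), H (θ+p)) = ∫ θ in p..1, H θ := by
    have := intervalIntegral.integral_comp_add_right (a := (0:ℝ)) (b := 1-p) H p
    rw [this]; norm_num
  have hshift2 : (∫ θ in (1-p)..(1:ℝ), H (θ+(p-1))) = ∫ θ in (0:ℝ)..p, H θ := by
    have := intervalIntegral.integral_comp_add_right (a := (1:ℝ)-p) (b := 1) H (p-1)
    rw [this]
    norm_num
  have hint1 : (∫ θ in (0:ℝ)..(1-p), f θ) = (∫ θ in p..1, H θ) - ∫ θ in (0:ℝ)..(1-p), H θ := by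
    rw [← intervalIntegral.integral_congr_ae hae1]
    rw [intervalIntegral.integral_sub hcomp1 (hHint 0 (1-p) le_rfl hp1' (by linarith))]
    rw [hshift1]
  have hint2 : (∫ θ in (1-p)..(1:ℝ), f θ) =
      (∫ θ in (0:ℝ)..p, H θ) + (p - ∫ θ in (1-p)..(1:ℝ), H θ) := by
    rw [← intervalIntegral.integral_congr_ae hae2]
    rw [intervalIntegral.integral_add hcomp2
      (intervalIntegrable_const.sub (hHint (1-p) 1 hp1' (by linarith) le_rfl))]
    rw [hshift2]
    congr 1
    rw [intervalIntegral.integral_sub intervalIntegrable_const (hHint (1-p) 1 hp1' (by linarith) le_rfl)]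
    simp
  have hHsplit1 : (∫ θ in (0:ℝ)..p, H θ) + (∫ θ in p..1, H θ) = ∫ θ in (0:ℝ)..1, H θ :=
    intervalIntegral.integral_add_adjacent_intervals
      (hHint 0 p le_rfl hp0.le hp1.le) (hHint p 1 hp0.le hp1.le le_rfl)
  have hHsplit2 : (∫ θ in (0:ℝ)..(1-p), H θ) + (∫ θ in (1-p)..1, H θ) = ∫ θ in (0:ℝ)..1, H θ :=
    intervalIntegral.integral_add_adjacent_intervals
      (hHint 0 (1-p) le_rfl hp1' (by linarith)) (hHint (1-p) 1 hp1' (by linarith) le_rfl)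
  have htot : (∫ θ in (0:ℝ)..1, f θ) = p := by
    rw [← intervalIntegral.integral_add_adjacent_intervals hfint1 hfint2, hint1, hint2]
    linarith
  -- existence of a good θ
  have hex : ∃ θ ∈ Icc (0:ℝ) 1, f θ ≤ p := by
    by_contra hcon
    push_neg at hcon
    have hfull : IntervalIntegrable f volume 0 1 := hfint1.trans hfint2
    have hgint : IntervalIntegrable (fun θ => f θ - p) volume 0 1 :=
      hfull.sub intervalIntegrable_const
    have hzero : (∫ θ in (0:ℝ)..1, (f θ - p)) = 0 := by
      rw [intervalIntegral.integral_sub hfull intervalIntegrable_const, htot]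
      simp
    have hnn : 0 ≤ᵐ[(volume : Measure ℝ).restrict (Ioc 0 1)] (fun θ => f θ - p) := by
      have : ∀ᵐ θ ∂(volume : Measure ℝ).restrict (Ioc 0 1), 0 ≤ f θ - p := by
        rw [ae_restrict_iff' measurableSet_Ioc]
        exact Filter.Eventually.of_forall fun θ hθ =>
          sub_nonneg.mpr (hcon θ (Ioc_subset_Icc_self hθ)).le
      exact this
    have := (intervalIntegral.integral_eq_zero_iff_of_le_of_nonneg_ae (by norm_num) hnn hgint).mp
      hzero
    have heq : ∀ᵐ θ ∂(volume : Measure ℝ), θ ∈ Ioc (0:ℝ) 1 → f θ - p = 0 :=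
      (ae_restrict_iff' measurableSet_Ioc).mp this
    have hcontra : ∀ᵐ θ ∂(volume : Measure ℝ), θ ∉ Ioc (0:ℝ) 1 :=
      heq.mono fun θ h hmem =>
        absurd (h hmem) (ne_of_gt (sub_pos.mpr (hcon θ (Ioc_subset_Icc_self hmem))))
    rw [ae_iff] at hcontra
    simp only [not_not] at hcontra
    rw [show {a | a ∈ Ioc (0:ℝ) 1} = Ioc (0:ℝ) 1 from rfl, Real.volume_Ioc] at hcontra
    simp at hcontra
  obtain ⟨θ, hθmem, hθle⟩ := hex
  have hθ0 : 0 ≤ θ := hθmem.1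
  have hθ1 : θ ≤ 1 := hθmem.2
  have hof : ∀ s : Set ℝ, ν s ≤ ENNReal.ofReal (ν s).toReal :=
    fun s => (ENNReal.ofReal_toReal (measure_ne_top ν s)).symm.le
  by_cases hwrap : θ + p ≤ 1
  · -- no wrap
    refine ⟨q θ, q (θ+p), hq0 θ hθ1, hqmono θ (θ+p) (by linarith) hwrap, hq1 (θ+p) hwrap, Or.inl ⟨?_, ?_⟩⟩
    · -- μ (Ioc (q θ) (q (θ+p))) = ofReal p
      have h1 := hadd μ 0 (q θ) (q (θ+p)) (hq0 θ hθ1) (hqmono θ (θ+p) (by linarith) hwrap)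
      rw [hqval θ hθ0 hθ1, hqval (θ+p) (by linarith) hwrap,
        ENNReal.ofReal_add hθ0 hp0.le] at h1
      exact ((ENNReal.add_right_inj ENNReal.ofReal_ne_top).mp h1).ge
    · -- ν side
      have hab : q θ ≤ q (θ+p) := hqmono θ (θ+p) (by linarith) hwrap
      have hb1 : q (θ+p) ≤ 1 := hq1 (θ+p) hwrap
      have ha0 : 0 ≤ q θ := hq0 θ hθ1
      have hνA : ν (Ioc (q θ) (q (θ+p))) ≤ ENNReal.ofReal p := by
        have : f θ = (ν (Ioc (q θ) (q (θ+p)))).toReal := by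
          rw [hfdef]; simp only; rw [if_pos hwrap]
        calc ν (Ioc (q θ) (q (θ+p))) ≤ ENNReal.ofReal (ν (Ioc (q θ) (q (θ+p)))).toReal := hof _
          _ ≤ ENNReal.ofReal p := ENNReal.ofReal_le_ofReal (by rw [← this]; exact hθle)
      have hdisj : Disjoint (Ioc (0:ℝ) (q θ)) (Ioc (q (θ+p)) 1) :=
        Ioc_disjoint_Ioc.mpr (min_le_of_left_le (le_max_of_le_right hab))
      have hU : ν (Ioc 0 (q θ) ∪ Ioc (q (θ+p)) 1) = ν (Ioc 0 (q θ)) + ν (Ioc (q (θ+p)) 1) :=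
        measure_union hdisj measurableSet_Ioc
      have htotal : ν (Ioc 0 (q θ) ∪ Ioc (q (θ+p)) 1) + ν (Ioc (q θ) (q (θ+p))) = 1 := by
        rw [hU]
        have e1 := hadd ν 0 (q θ) (q (θ+p)) ha0 hab
        have e2 := hadd ν 0 (q (θ+p)) 1 (le_trans ha0 hab) hb1
        calc ν (Ioc 0 (q θ)) + ν (Ioc (q (θ+p)) 1) + ν (Ioc (q θ) (q (θ+p)))
            = ν (Ioc 0 (q θ)) + ν (Ioc (q θ) (q (θ+p))) + ν (Ioc (q (θ+p)) 1) := by ring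
          _ = ν (Ioc 0 (q (θ+p))) + ν (Ioc (q (θ+p)) 1) := by rw [e1]
          _ = ν (Ioc 0 1) := e2
          _ = 1 := hν1
      have hsum : ENNReal.ofReal (1-p) + ENNReal.ofReal p = 1 := by
        rw [← ENNReal.ofReal_add (by linarith) hp0.le]
        norm_num
      have : ENNReal.ofReal (1-p) + ENNReal.ofReal p ≤
          ν (Ioc 0 (q θ) ∪ Ioc (q (θ+p)) 1) + ENNReal.ofReal p := by
        rw [hsum, ← htotal]
        exact add_le_add_right hνA _
      exact (ENNReal.add_le_add_iff_right ENNReal.ofReal_ne_top).mp this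
  · -- wrap
    push_neg at hwrap
    have harg0 : 0 ≤ θ+(p-1) := by linarith
    have harg1 : θ+(p-1) ≤ 1 := by linarith
    have hab : q (θ+(p-1)) ≤ q θ := hqmono _ _ (by linarith) hθ1
    have ha0 : 0 ≤ q (θ+(p-1)) := hq0 _ harg1
    have hb1 : q θ ≤ 1 := hq1 θ hθ1
    refine ⟨q (θ+(p-1)), q θ, ha0, hab, hb1, Or.inr ⟨?_, ?_⟩⟩
    · -- μ outer ≥ p
      have h1 : μ (Ioc 0 (q (θ+(p-1)))) = ENNReal.ofReal (θ+(p-1)) := hqval _ harg0 harg1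
      have h2 : μ (Ioc (q θ) 1) = ENNReal.ofReal (1-θ) := by
        have e := hadd μ 0 (q θ) 1 (hq0 θ hθ1) hb1
        rw [hqval θ hθ0 hθ1, hμ1] at e
        have : ENNReal.ofReal θ + μ (Ioc (q θ) 1) = ENNReal.ofReal θ + ENNReal.ofReal (1-θ) := by
          rw [e, ← ENNReal.ofReal_add hθ0 (by linarith)]
          norm_num
        exact (ENNReal.add_right_inj ENNReal.ofReal_ne_top).mp this
      have hdisj : Disjoint (Ioc (0:ℝ) (q (θ+(p-1)))) (Ioc (q θ) 1) :=
        Ioc_disjoint_Ioc.mpr (min_le_of_left_le (le_max_of_le_right hab))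
      rw [measure_union hdisj measurableSet_Ioc, h1, h2,
        ← ENNReal.ofReal_add harg0 (by linarith)]
      exact ENNReal.ofReal_le_ofReal (by linarith)
    · -- ν middle ≥ 1-p
      have hνA : ν (Ioc 0 (q (θ+(p-1))) ∪ Ioc (q θ) 1) ≤ ENNReal.ofReal p := by
        have : f θ = (ν (Ioc 0 (q (θ+(p-1))) ∪ Ioc (q θ) 1)).toReal := by
          rw [hfdef]; simp only; rw [if_neg (by linarith)]
        calc ν (Ioc 0 (q (θ+(p-1))) ∪ Ioc (q θ) 1)
            ≤ ENNReal.ofReal (ν (Ioc 0 (q (θ+(p-1))) ∪ Ioc (q θ) 1)).toReal := hof _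
          _ ≤ ENNReal.ofReal p := ENNReal.ofReal_le_ofReal (by rw [← this]; exact hθle)
      have hdisj : Disjoint (Ioc (0:ℝ) (q (θ+(p-1)))) (Ioc (q θ) 1) :=
        Ioc_disjoint_Ioc.mpr (min_le_of_left_le (le_max_of_le_right hab))
      have hU : ν (Ioc 0 (q (θ+(p-1))) ∪ Ioc (q θ) 1)
          = ν (Ioc 0 (q (θ+(p-1)))) + ν (Ioc (q θ) 1) := measure_union hdisj measurableSet_Ioc
      have htotal : ν (Ioc (q (θ+(p-1))) (q θ)) + ν (Ioc 0 (q (θ+(p-1))) ∪ Ioc (q θ) 1) = 1 := by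
        rw [hU]
        have e1 := hadd ν 0 (q (θ+(p-1))) (q θ) ha0 hab
        have e2 := hadd ν 0 (q θ) 1 (le_trans ha0 hab) hb1
        calc ν (Ioc (q (θ+(p-1))) (q θ)) + (ν (Ioc 0 (q (θ+(p-1)))) + ν (Ioc (q θ) 1))
            = ν (Ioc 0 (q (θ+(p-1)))) + ν (Ioc (q (θ+(p-1))) (q θ)) + ν (Ioc (q θ) 1) := by ring
          _ = ν (Ioc 0 (q θ)) + ν (Ioc (q θ) 1) := by rw [e1]
          _ = ν (Ioc 0 1) := e2
          _ = 1 := hν1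
      have hsum : ENNReal.ofReal (1-p) + ENNReal.ofReal p = 1 := by
        rw [← ENNReal.ofReal_add (by linarith) hp0.le]
        norm_num
      have : ENNReal.ofReal (1-p) + ENNReal.ofReal p ≤
          ν (Ioc (q (θ+(p-1))) (q θ)) + ENNReal.ofReal p := by
        rw [hsum, ← htotal]
        exact add_le_add_right hνA _
      exact (ENNReal.add_le_add_iff_right ENNReal.ofReal_ne_top).mp this

theorem piece_mid101 (a b : ℝ) :
    piece (n := 2) (k := 2) ![0, a, b, 1] ![1, 0, 1] 0 = Ioc a b := by
  unfold piece
  ext y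
  simp only [mem_iUnion, Fin.exists_fin_succ, mem_Ioc]
  constructor
  · rintro (⟨h, hy⟩ | ⟨h, hy⟩ | ⟨h, hy⟩ | ⟨⟨j⟩, _⟩)
    · simp at h
    · simpa using hy
    · simp at h
    · omega
  · intro hy
    refine Or.inr (Or.inl ⟨rfl, ?_⟩)
    simpa using hy

theorem piece_out101 (a b : ℝ) :
    piece (n := 2) (k := 2) ![0, a, b, 1] ![1, 0, 1] 1 = Ioc 0 a ∪ Ioc b 1 := by
  unfold piece
  ext y
  simp only [mem_iUnion, Fin.exists_fin_succ, mem_Ioc, mem_union]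
  constructor
  · rintro (⟨h, hy⟩ | ⟨h, hy⟩ | ⟨h, hy⟩ | ⟨⟨j⟩, _⟩)
    · exact Or.inl (by simpa using hy)
    · simp at h
    · exact Or.inr (by simpa using hy)
    · omega
  · rintro (hy | hy)
    · exact Or.inl ⟨rfl, by simpa using hy⟩
    · exact Or.inr (Or.inr (Or.inl ⟨rfl, by simpa using hy⟩))

theorem piece_mid010 (a b : ℝ) :
    piece (n := 2) (k := 2) ![0, a, b, 1] ![0, 1, 0] 1 = Ioc a b := by
  unfold piece
  ext y
  simp only [mem_iUnion, Fin.exists_fin_succ, mem_Ioc]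
  constructor
  · rintro (⟨h, hy⟩ | ⟨h, hy⟩ | ⟨h, hy⟩ | ⟨⟨j⟩, _⟩)
    · simp at h
    · simpa using hy
    · simp at h
    · omega
  · intro hy
    refine Or.inr (Or.inl ⟨rfl, ?_⟩)
    simpa using hy

theorem piece_out010 (a b : ℝ) :
    piece (n := 2) (k := 2) ![0, a, b, 1] ![0, 1, 0] 0 = Ioc 0 a ∪ Ioc b 1 := by
  unfold piece
  ext y
  simp only [mem_iUnion, Fin.exists_fin_succ, mem_Ioc, mem_union]
  constructor
  · rintro (⟨h, hy⟩ | ⟨h, hy⟩ | ⟨h, hy⟩ | ⟨⟨j⟩, _⟩)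
    · exact Or.inl (by simpa using hy)
    · simp at h
    · exact Or.inr (by simpa using hy)
    · omega
  · rintro (hy | hy)
    · exact Or.inl ⟨rfl, by simpa using hy⟩
    · exact Or.inr (Or.inr (Or.inl ⟨rfl, by simpa using hy⟩))

/-- Two agents with nonatomic probability measures on `[0,1]` and entitlements
`t₁, t₂ > 0`, `t₁ + t₂ = 1`, admit a `t`-proportional allocation with at most 2 cuts. -/
theorem two_agents_two_cuts
    (V : Fin 2 → Measure ℝ)
    (hprob : ∀ i, IsProbabilityMeasure (V i)) (hna : ∀ i, NoAtoms (V i))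
    (hsupp : ∀ i, V i ((Icc (0:ℝ) 1)ᶜ) = 0)
    (t : Fin 2 → ℝ) (htpos : ∀ i, 0 < t i) (htsum : t 0 + t 1 = 1) :
    ∃ (k : ℕ), k ≤ 2 ∧
      ∃ (x : Fin (k + 2) → ℝ) (owner : Fin (k + 1) → Fin 2),
        IsDivision x ∧
        ∀ i, ENNReal.ofReal (t i) ≤ V i (piece x owner i) := by
  haveI h0 := hprob 0
  haveI h1 := hprob 1
  haveI hn0 : NullSingletonClass (V 0) := hna 0
  haveI hn1 : NullSingletonClass (V 1) := hna 1
  have hone : ∀ i, V i (Ioc (0:ℝ) 1) = 1 := by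
    intro i
    haveI := hprob i
    haveI : NullSingletonClass (V i) := hna i
    have hIcc : V i (Icc (0:ℝ) 1) = 1 := by
      have h := measure_add_measure_compl (μ := V i) (measurableSet_Icc (a := (0:ℝ)) (b := 1))
      rw [hsupp i, add_zero, measure_univ] at h
      exact h
    apply le_antisymm
    · rw [← hIcc]
      exact measure_mono Ioc_subset_Icc_self
    · rw [← hIcc]
      have hsub : Icc (0:ℝ) 1 ⊆ {0} ∪ Ioc 0 1 := by
        intro y hy
        rcases eq_or_lt_of_le hy.1 with h | h
        · exact Or.inl (by simp [← h])
        · exact Or.inr ⟨h, hy.2⟩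
      calc V i (Icc 0 1) ≤ V i ({0} ∪ Ioc 0 1) := measure_mono hsub
        _ ≤ V i {0} + V i (Ioc 0 1) := measure_union_le _ _
        _ = V i (Ioc 0 1) := by rw [measure_singleton, zero_add]
  have hp0 : 0 < t 0 := htpos 0
  have hp1 : t 0 < 1 := by linarith [htpos 1]
  have ht1 : t 1 = 1 - t 0 := by linarith
  obtain ⟨a, b, ha0, hab, hb1, hcase⟩ :=
    exists_arc (V 0) (V 1) (hone 0) (hone 1)
      (quantile_val (V 0) (hone 0)) (t 0) hp0 hp1
  refine ⟨2, le_rfl, ![0, a, b, 1], ?_⟩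
  have hmono : Monotone (![0, a, b, 1] : Fin 4 → ℝ) := by
    rw [Fin.monotone_iff_le_succ]
    intro i
    fin_cases i <;> simp [Fin.succ, Fin.castSucc] <;> assumption
  have hdiv : IsDivision (![0, a, b, 1] : Fin 4 → ℝ) := ⟨hmono, rfl, rfl⟩
  rcases hcase with ⟨hmid, hout⟩ | ⟨hout, hmid⟩
  · -- agent 0 gets the middle interval
    refine ⟨![1, 0, 1], hdiv, ?_⟩
    intro i
    fin_cases i
    · rw [show ((⟨0, by omega⟩ : Fin 2)) = (0 : Fin 2) from rfl, piece_mid101]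
      exact hmid
    · rw [show ((⟨1, by omega⟩ : Fin 2)) = (1 : Fin 2) from rfl, piece_out101, ht1]
      exact hout
  · -- agent 0 gets the outer pieces
    refine ⟨![0, 1, 0], hdiv, ?_⟩
    intro i
    fin_cases i
    · rw [show ((⟨0, by omega⟩ : Fin 2)) = (0 : Fin 2) from rfl, piece_out010]
      exact hout
    · rw [show ((⟨1, by omega⟩ : Fin 2)) = (1 : Fin 2) from rfl, piece_mid010, ht1]
      exact hmid
end
end

section
/- For every n ≥ 2 and integer D ≥ n, if n−1 of the entitlements equal 1/D (so the remaining entitlement is (D−n+1)/D), then for any n nonatomic probability measures on [0,1] there exists a t-proportional allocation using at most 2n−2 cuts. -/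
open MeasureTheory Set Filter Topology

lemma cdfF_mono (μ : Measure ℝ) [IsFiniteMeasure μ] :
    Monotone (fun x => (μ (Iic x)).toReal) := fun x y hxy =>
  ENNReal.toReal_mono (measure_ne_top μ _) (measure_mono (Iic_subset_Iic.2 hxy))

lemma cdfF_cont (μ : Measure ℝ) [IsFiniteMeasure μ] [NullSingletonClass μ] :
    Continuous (fun x => (μ (Iic x)).toReal) := by
  set F := fun x => (μ (Iic x)).toReal with hF
  have hmono : Monotone F := cdfF_mono μ
  rw [continuous_iff_continuousAt]
  intro x
  rw [continuousAt_iff_continuous_left_right]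
  constructor
  · -- left: within Iic x
    rw [← continuousWithinAt_Iio_iff_Iic]
    have h1 : Tendsto F (𝓝[<] x) (𝓝 (sSup (F '' Iio x))) := hmono.tendsto_nhdsLT x
    have h2 : sSup (F '' Iio x) = F x := by
      apply le_antisymm
      · exact csSup_le (Nonempty.image _ nonempty_Iio) (by
          rintro _ ⟨y, hy, rfl⟩; exact hmono hy.le)
      · -- via sequence
        have hseq : Tendsto (fun k : ℕ => F (x - 1 / (k + 1))) atTop (𝓝 (F x)) := by
          have hU : ⋃ k : ℕ, Iic (x - 1 / (k + 1 : ℝ)) = Iio x := by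
            ext y
            simp only [mem_iUnion, mem_Iic, mem_Iio]
            constructor
            · rintro ⟨k, hk⟩
              have : (0:ℝ) < 1 / (k + 1) := by positivity
              linarith
            · intro hy
              obtain ⟨k, hk⟩ := exists_nat_one_div_lt (show (0:ℝ) < x - y by linarith)
              exact ⟨k, by push_cast at hk ⊢; linarith⟩
          have := tendsto_measure_iUnion_atTop (μ := μ)
            (s := fun k : ℕ => Iic (x - 1 / (k + 1 : ℝ)))
            (fun i j hij => Iic_subset_Iic.2 (by
              have : (1:ℝ) / (j + 1) ≤ 1 / (i + 1) := by
                apply one_div_le_one_div_of_le <;> push_cast <;> [positivity; simpa using hij]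
              linarith))
          rw [hU] at this
          have hx : μ (Iio x) = μ (Iic x) := measure_congr (Iio_ae_eq_Iic)
          rw [hx] at this
          exact (ENNReal.tendsto_toReal (measure_ne_top μ _)).comp this
        refine le_of_tendsto hseq (Eventually.of_forall fun k => ?_)
        refine le_csSup (hmono.map_bddAbove bddAbove_Iio) ⟨x - 1/(k+1), ?_, rfl⟩
        simp only [mem_Iio]
        have : (0:ℝ) < 1 / (k + 1) := by positivity
        linarith
    rwa [h2] at h1
  · rw [← continuousWithinAt_Ioi_iff_Ici]
    have h1 : Tendsto F (𝓝[>] x) (𝓝 (sInf (F '' Ioi x))) := hmono.tendsto_nhdsGT x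
    have h2 : sInf (F '' Ioi x) = F x := by
      apply le_antisymm
      · have hseq : Tendsto (fun k : ℕ => F (x + 1 / (k + 1))) atTop (𝓝 (F x)) := by
          have hI : ⋂ k : ℕ, Iic (x + 1 / (k + 1 : ℝ)) = Iic x := by
            ext y
            simp only [mem_iInter, mem_Iic]
            constructor
            · intro h
              by_contra hy
              push_neg at hy
              obtain ⟨k, hk⟩ := exists_nat_one_div_lt (show (0:ℝ) < y - x by linarith)
              have := h k
              push_cast at hk
              linarith
            · intro hy k
              have : (0:ℝ) < 1 / (k + 1) := by positivity
              linarith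
          have := tendsto_measure_iInter_atTop (μ := μ)
            (s := fun k : ℕ => Iic (x + 1 / (k + 1 : ℝ)))
            (fun k => (measurableSet_Iic).nullMeasurableSet)
            (fun i j hij => Iic_subset_Iic.2 (by
              have : (1:ℝ) / (j + 1) ≤ 1 / (i + 1) := by
                apply one_div_le_one_div_of_le <;> push_cast <;> [positivity; simpa using hij]
              linarith))
            ⟨0, measure_ne_top μ _⟩
          rw [hI] at this
          exact (ENNReal.tendsto_toReal (measure_ne_top μ _)).comp this
        refine ge_of_tendsto hseq (Eventually.of_forall fun k => ?_)
        refine csInf_le (hmono.map_bddBelow bddBelow_Ioi) ⟨x + 1/(k+1), ?_, rfl⟩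
        simp only [mem_Ioi]
        have : (0:ℝ) < 1 / (k + 1) := by positivity
        linarith
      · exact le_csInf (Nonempty.image _ nonempty_Ioi) (by
          rintro _ ⟨y, hy, rfl⟩; exact hmono hy.le)
    rwa [h2] at h1

lemma Ioc_split (μ : Measure ℝ) [IsFiniteMeasure μ] {a x b : ℝ} (hax : a ≤ x) (hxb : x ≤ b) :
    (μ (Ioc a b)).toReal = (μ (Ioc a x)).toReal + (μ (Ioc x b)).toReal := by
  rw [← ENNReal.toReal_add (measure_ne_top μ _) (measure_ne_top μ _),
    ← measure_union (Ioc_disjoint_Ioc_of_le le_rfl) measurableSet_Ioc,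
    Ioc_union_Ioc_eq_Ioc hax hxb]

lemma exists_cut (μ : Measure ℝ) [IsFiniteMeasure μ] [NullSingletonClass μ] {a b c : ℝ} (hab : a ≤ b)
    (hc : 0 ≤ c) (hcb : c ≤ (μ (Ioc a b)).toReal) :
    ∃ x, x ∈ Icc a b ∧ (μ (Ioc a x)).toReal = c := by
  set f := fun x => (μ (Ioc a x)).toReal with hf
  have hcongr : ∀ x ∈ Icc a b, f x = (μ (Iic x)).toReal - (μ (Iic a)).toReal := by
    intro x hx
    have : Ioc a x = Iic x \ Iic a := by
      rw [Iic_sdiff_Iic]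
    rw [hf]
    simp only
    rw [this, measure_diff (Iic_subset_Iic.2 hx.1) measurableSet_Iic.nullMeasurableSet
      (measure_ne_top μ _), ENNReal.toReal_sub_of_le (measure_mono (Iic_subset_Iic.2 hx.1))
      (measure_ne_top μ _)]
  have hcont : ContinuousOn f (Icc a b) := by
    apply ContinuousOn.congr (f := fun x => (μ (Iic x)).toReal - (μ (Iic a)).toReal)
    · exact ((cdfF_cont μ).sub continuous_const).continuousOn
    · intro x hx; exact hcongr x hx
  have hfa : f a = 0 := by simp [hf]
  have := intermediate_value_Icc hab hcont
  have hmem : c ∈ Icc (f a) (f b) := by rw [hfa]; exact ⟨hc, hcb⟩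
  obtain ⟨x, hx, hfx⟩ := this hmem
  exact ⟨x, hx, hfx⟩

def goodVal (c : ℝ) {n : ℕ} (V : Fin n → Measure ℝ) : ℝ → List (Fin n × ℝ) → Prop
  | _, [] => True
  | a, p :: L => c ≤ ((V p.1) (Ioc a p.2)).toReal ∧ goodVal c V p.2 L

lemma knife {n : ℕ} (V : Fin n → Measure ℝ) (c : ℝ) (hc : 0 < c)
    (hprob : ∀ i, IsFiniteMeasure (V i)) (hna : ∀ i, NullSingletonClass (V i)) :
    ∀ (m : ℕ) (A : List (Fin n)), A.length = m + 1 → ∀ (a b : ℝ), a ≤ b →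
    (∀ i ∈ A, (m + 1 : ℝ) * c ≤ ((V i) (Ioc a b)).toReal) →
    ∃ L : List (Fin n × ℝ), List.Perm (L.map Prod.fst) A ∧ List.Chain (· ≤ ·) a (L.map Prod.snd)
      ∧ (L.map Prod.snd).getLastD a = b ∧ goodVal c V a L := by
  intro m
  induction m with
  | zero =>
    intro A hA a b hab hval
    obtain ⟨i, rfl⟩ := List.length_eq_one_iff.mp hA
    refine ⟨[(i, b)], by simp, List.chain_cons.mpr ⟨hab, List.isChain_singleton _⟩, by simp, ?_, trivial⟩
    have := hval i (by simp)
    simpa using this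
  | succ m ih =>
    intro A hA a b hab hval
    haveI := hprob; haveI := hna
    classical
    -- choice of cut points
    set cf : Fin n → ℝ := fun i =>
      if h : ∃ x, x ∈ Icc a b ∧ ((V i) (Ioc a x)).toReal = c then h.choose else b with hcf
    have hcfA : ∀ i ∈ A, cf i ∈ Icc a b ∧ ((V i) (Ioc a (cf i))).toReal = c := by
      intro i hi
      have hex : ∃ x, x ∈ Icc a b ∧ ((V i) (Ioc a x)).toReal = c := by
        apply exists_cut (V i) hab hc.le
        have hv := hval i hi
        push_cast at hv
        nlinarith
      simp only [hcf, dif_pos hex]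
      exact hex.choose_spec
    -- argmin
    obtain ⟨j, hjmem⟩ : ∃ j, j ∈ A.argmin cf := by
      cases h : A.argmin cf with
      | none => exact absurd (List.argmin_eq_none.mp h) (by simp [← List.length_pos_iff_ne_nil, hA])
      | some j => exact ⟨j, by simp [h]⟩
    have hj : j ∈ A := List.argmin_mem hjmem
    have hmin : ∀ i ∈ A, cf j ≤ cf i := fun i hi => List.le_of_mem_argmin hi hjmem
    obtain ⟨hjIcc, hjval⟩ := hcfA j hj
    set A' := A.erase j with hA'
    have hA'len : A'.length = m + 1 := by
      rw [hA', List.length_erase_of_mem hj, hA]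
      omega
    have hval' : ∀ i ∈ A', (m + 1 : ℝ) * c ≤ ((V i) (Ioc (cf j) b)).toReal := by
      intro i hi
      have hiA : i ∈ A := List.mem_of_mem_erase hi
      obtain ⟨hiIcc, hival⟩ := hcfA i hiA
      have hsplit := Ioc_split (V i) hjIcc.1 hjIcc.2
      have hmono : ((V i) (Ioc a (cf j))).toReal ≤ ((V i) (Ioc a (cf i))).toReal :=
        ENNReal.toReal_mono (measure_ne_top _ _)
          (measure_mono (Ioc_subset_Ioc_right (hmin i hiA)))
      have hv := hval i hiA
      rw [hival] at hmono
      push_cast at hv ⊢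
      linarith
    obtain ⟨L', hperm', hchain', hlast', hgood'⟩ := ih A' hA'len (cf j) b hjIcc.2 hval'
    refine ⟨(j, cf j) :: L', ?_, ?_, ?_, ?_, ?_⟩
    · simpa using ((hperm'.cons j).trans (List.perm_cons_erase hj).symm)
    · exact List.Chain.cons hjIcc.1 hchain'
    · rw [List.map_cons, List.getLastD_cons]; exact hlast'
    · rw [hjval]
    · exact hgood'

def pieces {n : ℕ} : ℝ → List (Fin n × ℝ) → Fin n → Set ℝ
  | _, [], _ => ∅
  | a, p :: L, j => (if p.1 = j then Ioc a p.2 else ∅) ∪ pieces p.2 L j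

lemma pieces_measurable {n : ℕ} : ∀ (L : List (Fin n × ℝ)) (a : ℝ) (j : Fin n),
    MeasurableSet (pieces a L j)
  | [], _, _ => by simp [pieces]
  | p :: L, a, j => by
    refine MeasurableSet.union ?_ (pieces_measurable L p.2 j)
    split <;> simp [measurableSet_Ioc]

lemma chain_le_getLastD : ∀ (l : List ℝ) (a : ℝ), List.Chain (· ≤ ·) a l → a ≤ l.getLastD a
  | [], _, _ => le_rfl
  | b :: l, a, h => by
    obtain ⟨hab, h'⟩ := List.chain_cons.mp h
    rw [List.getLastD_cons]
    exact hab.trans (chain_le_getLastD l b h')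

lemma pieces_subset {n : ℕ} : ∀ (L : List (Fin n × ℝ)) (a : ℝ) (j : Fin n),
    List.Chain (· ≤ ·) a (L.map Prod.snd) →
    pieces a L j ⊆ Ioc a ((L.map Prod.snd).getLastD a)
  | [], a, j, _ => by simp [pieces]
  | p :: L, a, j, h => by
    rw [List.map_cons] at h ⊢
    obtain ⟨hap, h'⟩ := List.chain_cons.mp h
    rw [List.getLastD_cons]
    have hsub := pieces_subset L p.2 j h'
    have hlast : p.2 ≤ (L.map Prod.snd).getLastD p.2 := chain_le_getLastD _ p.2 h'
    intro y hy
    rcases hy with hy | hy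
    · have : y ∈ Ioc a p.2 := by
        by_cases hpj : p.1 = j
        · simpa [hpj] using hy
        · simp [hpj] at hy
      exact ⟨this.1, this.2.trans hlast⟩
    · have := hsub hy
      exact ⟨hap.trans_lt this.1, this.2⟩

lemma pieces_value {n : ℕ} (V : Fin n → Measure ℝ) (c : ℝ) (hc : 0 ≤ c)
    (hprob : ∀ i, IsFiniteMeasure (V i)) :
    ∀ (L : List (Fin n × ℝ)) (a : ℝ) (j : Fin n),
    List.Chain (· ≤ ·) a (L.map Prod.snd) → goodVal c V a L →
    ((L.map Prod.fst).count j : ℝ) * c ≤ ((V j) (pieces a L j)).toReal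
  | [], a, j, _, _ => by simp [pieces]
  | p :: L, a, j, hch, hgv => by
    haveI := hprob
    obtain ⟨hap, h'⟩ := List.chain_cons.mp (by rw [List.map_cons] at hch; exact hch)
    obtain ⟨hv, hgv'⟩ := hgv
    have IH := pieces_value V c hc hprob L p.2 j h' hgv'
    by_cases hpj : p.1 = j
    · have hdisj : Disjoint (Ioc a p.2) (pieces p.2 L j) := by
        refine Set.disjoint_left.mpr fun y hy hy2 => ?_
        exact absurd ((pieces_subset L p.2 j h') hy2).1 (not_lt.mpr hy.2)
      have hm : (V j) (pieces a (p :: L) j) = (V j) (Ioc a p.2) + (V j) (pieces p.2 L j) := by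
        rw [pieces, if_pos hpj, measure_union hdisj (pieces_measurable L p.2 j)]
      subst hpj
      rw [hm, ENNReal.toReal_add (measure_ne_top _ _) (measure_ne_top _ _), List.map_cons,
        List.count_cons_self]
      push_cast
      linarith
    · rw [pieces, if_neg hpj, List.map_cons,
        List.count_cons_of_ne hpj, Set.empty_union]
      exact IH


def mergeRuns {n : ℕ} : List (Fin n × ℝ) → List (Fin n × ℝ)
  | [] => []
  | p :: L => match mergeRuns L with
    | [] => [p]
    | q :: M => if p.1 = q.1 then q :: M else p :: q :: M

lemma mergeRuns_cons_nil {n : ℕ} {p : Fin n × ℝ} {L : List (Fin n × ℝ)}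
    (h : mergeRuns L = []) : mergeRuns (p :: L) = [p] := by
  rw [mergeRuns, h]

lemma mergeRuns_cons_cons {n : ℕ} {p q : Fin n × ℝ} {L M : List (Fin n × ℝ)}
    (h : mergeRuns L = q :: M) :
    mergeRuns (p :: L) = if p.1 = q.1 then q :: M else p :: q :: M := by
  rw [mergeRuns, h]

lemma mergeRuns_ne_nil {n : ℕ} (p : Fin n × ℝ) (L : List (Fin n × ℝ)) :
    mergeRuns (p :: L) ≠ [] := by
  cases h : mergeRuns L with
  | nil => rw [mergeRuns_cons_nil h]; simp
  | cons q M => rw [mergeRuns_cons_cons h]; split <;> simp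

lemma mergeRuns_sublist {n : ℕ} : ∀ L : List (Fin n × ℝ), (mergeRuns L).Sublist L
  | [] => List.Sublist.refl _
  | p :: L => by
    have IH := mergeRuns_sublist L
    cases h : mergeRuns L with
    | nil =>
      rw [mergeRuns_cons_nil h]
      cases L with
      | nil => simp
      | cons q M => exact absurd h (mergeRuns_ne_nil q M)
    | cons q M =>
      rw [h] at IH
      rw [mergeRuns_cons_cons h]
      split
      · exact IH.trans (List.sublist_cons_self _ _)
      · exact IH.cons₂ p

lemma mergeRuns_getLastD {n : ℕ} : ∀ (L : List (Fin n × ℝ)) (a : ℝ),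
    ((mergeRuns L).map Prod.snd).getLastD a = (L.map Prod.snd).getLastD a
  | [], _ => rfl
  | p :: L, a => by
    cases h : mergeRuns L with
    | nil =>
      rw [mergeRuns_cons_nil h]
      cases L with
      | nil => rfl
      | cons q M => exact absurd h (mergeRuns_ne_nil q M)
    | cons q M =>
      have IH := mergeRuns_getLastD L p.2
      rw [h] at IH
      rw [mergeRuns_cons_cons h, List.map_cons (l := L), List.getLastD_cons, ← IH]
      split <;> simp only [List.map_cons, List.getLastD_cons]

lemma mergeRuns_chain {n : ℕ} : ∀ (L : List (Fin n × ℝ)) (a : ℝ),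
    List.Chain (· ≤ ·) a (L.map Prod.snd) →
    List.Chain (· ≤ ·) a ((mergeRuns L).map Prod.snd)
  | [], _, h => h
  | p :: L, a, h => by
    obtain ⟨hap, h'⟩ := List.chain_cons.mp (by rw [List.map_cons] at h; exact h)
    have IH := mergeRuns_chain L p.2 h'
    cases hm : mergeRuns L with
    | nil => rw [mergeRuns_cons_nil hm]; exact List.chain_cons.mpr ⟨hap, List.isChain_singleton _⟩
    | cons q M =>
      rw [hm, List.map_cons] at IH
      obtain ⟨hpq, hIH⟩ := List.chain_cons.mp IH
      rw [mergeRuns_cons_cons hm]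
      split
      · rw [List.map_cons]
        exact List.chain_cons.mpr ⟨hap.trans hpq, hIH⟩
      · rw [List.map_cons, List.map_cons]
        exact List.chain_cons.mpr ⟨hap, List.chain_cons.mpr ⟨hpq, hIH⟩⟩

lemma mergeRuns_chain' {n : ℕ} : ∀ L : List (Fin n × ℝ),
    List.Chain' (fun p q => p.1 ≠ q.1) (mergeRuns L)
  | [] => List.isChain_nil
  | p :: L => by
    have IH := mergeRuns_chain' L
    cases hm : mergeRuns L with
    | nil => rw [mergeRuns_cons_nil hm]; exact List.isChain_singleton _
    | cons q M =>
      rw [hm] at IH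
      rw [mergeRuns_cons_cons hm]
      split
      · exact IH
      · exact List.IsChain.cons_cons (by assumption) IH

lemma mergeRuns_pieces {n : ℕ} : ∀ (L : List (Fin n × ℝ)) (a : ℝ) (j : Fin n),
    List.Chain (· ≤ ·) a (L.map Prod.snd) →
    pieces a L j ⊆ pieces a (mergeRuns L) j
  | [], _, _, _ => subset_rfl
  | p :: L, a, j, h => by
    obtain ⟨hap, h'⟩ := List.chain_cons.mp (by rw [List.map_cons] at h; exact h)
    have IH := mergeRuns_pieces L p.2 j h'
    cases hm : mergeRuns L with
    | nil =>
      rw [mergeRuns_cons_nil hm]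
      cases L with
      | nil => exact subset_rfl
      | cons q M => exact absurd hm (mergeRuns_ne_nil q M)
    | cons q M =>
      rw [hm] at IH
      have hpq : p.2 ≤ q.2 := by
        have := mergeRuns_chain L p.2 h'
        rw [hm, List.map_cons] at this
        exact (List.chain_cons.mp this).1
      rw [mergeRuns_cons_cons hm]
      by_cases hsame : p.1 = q.1
      · rw [if_pos hsame, pieces, pieces]
        intro y hy
        rcases hy with hy | hy
        · by_cases hqj : q.1 = j
          · have hyIoc : y ∈ Ioc a p.2 := by
              rw [hsame, if_pos hqj] at hy; exact hy
            left
            rw [if_pos hqj]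
            exact ⟨hyIoc.1, hyIoc.2.trans hpq⟩
          · rw [hsame, if_neg hqj] at hy
            exact absurd hy (notMem_empty y)
        · have hz := IH hy
          rw [pieces] at hz
          rcases hz with hz | hz
          · by_cases hqj : q.1 = j
            · have hyIoc : y ∈ Ioc p.2 q.2 := by rw [if_pos hqj] at hz; exact hz
              left
              rw [if_pos hqj]
              exact ⟨hap.trans_lt hyIoc.1, hyIoc.2⟩
            · rw [if_neg hqj] at hz
              exact absurd hz (notMem_empty y)
          · right; exact hz
      · rw [if_neg hsame, pieces, pieces]
        exact Set.union_subset_union_right _ IH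

lemma chainCount {n : ℕ} (il : Fin n) : ∀ l : List (Fin n), l.Chain' (· ≠ ·) →
    2 * l.count il ≤ l.length + 1
  | [] , _ => by simp
  | [a], _ => by
    by_cases h : a = il <;> simp [List.count_cons, h]
  | a :: b :: r, h => by
    obtain ⟨hab, h'⟩ := List.isChain_cons_cons.mp h
    by_cases ha : a = il
    · have hb : b ≠ il := fun hbil => hab (by rw [ha, hbil])
      have IH := chainCount il r (List.IsChain.tail h')
      subst ha
      simp only [List.count_cons, List.length_cons, beq_iff_eq]
      norm_num
      simp only [if_neg hb]
      omega
    · have IH := chainCount il (b :: r) h'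
      simp only [List.count_cons, List.length_cons, beq_iff_eq, if_neg ha] at *
      omega

lemma len_split {n : ℕ} (il : Fin n) : ∀ l : List (Fin n),
    l.length = l.count il + (l.filter (fun x => x ≠ il)).length
  | [] => rfl
  | a :: l => by
    by_cases h : a = il <;>
      simp [List.count_cons, List.filter_cons, h, len_split il l] <;> omega

lemma pieces_mem {n : ℕ} : ∀ (L : List (Fin n × ℝ)) (a y : ℝ) (i : Fin n),
    y ∈ pieces a L i → ∃ p, p < L.length ∧ (L.map Prod.fst).getD p i = i ∧
      y ∈ Ioc ((a :: L.map Prod.snd).getD p 0) ((L.map Prod.snd).getD p 0)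
  | [], _, _, _, h => by simp [pieces] at h
  | q :: L, a, y, i, h => by
    rw [pieces] at h
    rcases h with h | h
    · by_cases hqi : q.1 = i
      · refine ⟨0, by simp, by simp [hqi], by rw [if_pos hqi] at h; simpa using h⟩
      · rw [if_neg hqi] at h
        exact absurd h (notMem_empty y)
    · obtain ⟨p, hp, hfst, hmem⟩ := pieces_mem L q.2 y i h
      refine ⟨p + 1, by simpa using hp, by simpa using hfst, ?_⟩
      simpa using hmem

lemma getD_last : ∀ (l : List ℝ) (d : ℝ), l ≠ [] → l.getD (l.length - 1) d = l.getLastD d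
  | [], _, h => absurd rfl h
  | [a], _, _ => rfl
  | a :: b :: l, d, _ => by
    have IH := getD_last (b :: l) d (by simp)
    simp only [List.length_cons, Nat.add_sub_cancel] at IH ⊢
    rw [List.getD_cons_succ, IH, List.getLastD_cons, List.getLastD_cons, List.getLastD_cons]

noncomputable section

/-- If `n - 1` of the entitlements equal `1/D` (for an integer `D ≥ n`), so the remaining
entitlement is `(D - n + 1)/D`, then a `t`-proportional allocation exists with at most
`2n - 2` cuts. -/
theorem almost_equal_entitlements (n D : ℕ) (hn : 2 ≤ n) (hD : n ≤ D)
    (V : Fin n → Measure ℝ)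
    (hprob : ∀ i, IsProbabilityMeasure (V i)) (hna : ∀ i, NoAtoms (V i))
    (hsupp : ∀ i, V i ((Icc (0:ℝ) 1)ᶜ) = 0)
    (il : Fin n) (hil : (il : ℕ) = n - 1)
    (t : Fin n → ℝ)
    (hto : ∀ i : Fin n, i ≠ il → t i = 1 / D)
    (htl : t il = ((D:ℝ) - n + 1) / D) :
    ∃ (k : ℕ), k ≤ 2 * n - 2 ∧
      ∃ (x : Fin (k + 2) → ℝ) (owner : Fin (k + 1) → Fin n),
        IsDivision x ∧
        ∀ i, ENNReal.ofReal (t i) ≤ V i (piece x owner i) := by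
  classical
  haveI := hprob
  haveI : ∀ i, NullSingletonClass (V i) := hna
  have hD1 : 1 ≤ D := le_trans (by omega) hD
  have hDpos : (0:ℝ) < D := by exact_mod_cast (by omega : 0 < D)
  have hc : (0:ℝ) < 1 / D := by positivity
  -- total value on (0,1] is 1
  have hone : ∀ i, ((V i) (Ioc (0:ℝ) 1)).toReal = 1 := by
    intro i
    have h1 : (V i) (Icc (0:ℝ) 1) = 1 := by
      have := measure_add_measure_compl (μ := V i) (measurableSet_Icc (a := (0:ℝ)) (b := 1))
      rw [hsupp i, add_zero, measure_univ] at this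
      exact this
    have h2 : (V i) (Ioc (0:ℝ) 1) = (V i) (Icc (0:ℝ) 1) := measure_congr Ioc_ae_eq_Icc
    rw [h2, h1, ENNReal.toReal_one]
  -- the agent list
  set A : List (Fin n) :=
    ((List.finRange n).filter (fun x => x ≠ il)) ++ List.replicate (D - n + 1) il with hA
  have hfl : ((List.finRange n).filter (fun x => x ≠ il)).length = n - 1 := by
    have := len_split il (List.finRange n)
    rw [List.length_finRange, List.count_eq_one_of_mem (List.nodup_finRange n)
      (List.mem_finRange il)] at this
    omega
  have hAlen : A.length = (D - 1) + 1 := by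
    rw [hA, List.length_append, List.length_replicate, hfl]
    omega
  have hval : ∀ i ∈ A, ((D - 1 : ℕ) + 1 : ℝ) * (1 / D) ≤ ((V i) (Ioc (0:ℝ) 1)).toReal := by
    intro i _
    rw [hone i]
    have : ((D - 1 : ℕ) : ℝ) + 1 = (D : ℝ) := by
      have : ((D - 1 : ℕ) : ℝ) = (D : ℝ) - 1 := by
        push_cast [Nat.cast_sub hD1]
        ring
      rw [this]; ring
    rw [this]
    rw [mul_one_div, div_self (ne_of_gt hDpos)]
  obtain ⟨L, hperm, hchain, hlast, hgood⟩ :=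
    knife V (1 / D) hc (fun i => by haveI := hprob i; exact inferInstance) hna (D - 1) A hAlen 0 1
      (by norm_num) hval
  -- merge runs
  set M := mergeRuns L with hM
  have hLne : L ≠ [] := by
    intro h
    rw [h] at hperm
    have : A.length = 0 := by rw [← hperm.length_eq]; simp
    omega
  have hMne : M ≠ [] := by
    rw [hM]
    cases L with
    | nil => exact absurd rfl hLne
    | cons p L' => exact mergeRuns_ne_nil p L'
  have hMchain : List.Chain (· ≤ ·) 0 (M.map Prod.snd) := mergeRuns_chain L 0 hchain
  have hMlast : (M.map Prod.snd).getLastD 0 = 1 := by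
    rw [hM, mergeRuns_getLastD]; exact hlast
  -- length bound
  have hcount : 2 * (M.map Prod.fst).count il ≤ (M.map Prod.fst).length + 1 := by
    apply chainCount
    show List.IsChain _ _; rw [List.isChain_map]
    exact mergeRuns_chain' L
  have hfilterM : ((M.map Prod.fst).filter (fun x => x ≠ il)).length ≤ n - 1 := by
    have hsub : ((M.map Prod.fst).filter (fun x => x ≠ il)).Sublist
        ((L.map Prod.fst).filter (fun x => x ≠ il)) :=
      ((mergeRuns_sublist L).map Prod.fst).filter _
    have hlen := hsub.length_le
    have hpf : ((L.map Prod.fst).filter (fun x => x ≠ il)).length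
        = (A.filter (fun x => x ≠ il)).length := (hperm.filter _).length_eq
    have hAf : (A.filter (fun x => x ≠ il)).length = n - 1 := by
      rw [hA, List.filter_append]
      have h1 : (List.replicate (D - n + 1) il).filter (fun x => x ≠ il) = [] := by
        apply List.filter_eq_nil_iff.mpr
        intro a ha
        rw [List.eq_of_mem_replicate ha]
        simp
      have h2 : (((List.finRange n).filter (fun x => x ≠ il)).filter (fun x => x ≠ il))
          = (List.finRange n).filter (fun x => x ≠ il) := by
        apply List.filter_eq_self.mpr
        intro a ha
        exact (List.mem_filter.mp ha).2
      rw [h1, h2, List.length_append, List.length_nil, hfl]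
      omega
    omega
  have hMlen : M.length ≤ 2 * n - 1 := by
    have h1 := len_split il (M.map Prod.fst)
    have h2 : (M.map Prod.fst).length = M.length := List.length_map _
    omega
  set k := M.length - 1 with hk
  have hkM : M.length = k + 1 := by
    rw [hk]
    have : 0 < M.length := List.length_pos_iff.mpr hMne
    omega
  refine ⟨k, by omega, ?_⟩
  have hsndlen : (M.map Prod.snd).length = k + 1 := by rw [List.length_map, hkM]
  have hfstlen : (M.map Prod.fst).length = k + 1 := by rw [List.length_map, hkM]
  set x : Fin (k + 2) → ℝ := fun j => ((0:ℝ) :: M.map Prod.snd).getD (j : ℕ) 0 with hx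
  set owner : Fin (k + 1) → Fin n := fun j => (M.map Prod.fst).getD (j : ℕ) il with howner
  refine ⟨x, owner, ⟨?_, ?_, ?_⟩, ?_⟩
  · -- Monotone x
    have hp : List.Pairwise (· ≤ ·) ((0:ℝ) :: M.map Prod.snd) :=
      List.isChain_iff_pairwise.mp hMchain
    intro j j' hjj'
    rcases eq_or_lt_of_le hjj' with h | h
    · rw [h]
    · have hj : (j : ℕ) < ((0:ℝ) :: M.map Prod.snd).length := by
        simp only [List.length_cons, hsndlen]
        omega
      have hj' : (j' : ℕ) < ((0:ℝ) :: M.map Prod.snd).length := by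
        simp only [List.length_cons, hsndlen]
        omega
      rw [hx]
      simp only
      rw [List.getD_eq_getElem _ _ hj, List.getD_eq_getElem _ _ hj']
      exact List.pairwise_iff_getElem.mp hp _ _ hj hj' h
  · rw [hx]; rfl
  · rw [hx]
    simp only [Fin.val_last]
    rw [List.getD_cons_succ]
    have : k = (M.map Prod.snd).length - 1 := by omega
    rw [this, getD_last _ _ (by simp [hMne]), hMlast]
  · -- values
    intro i
    have hsub1 : pieces 0 L i ⊆ pieces 0 M i := mergeRuns_pieces L 0 i hchain
    have hsub2 : pieces 0 M i ⊆ piece x owner i := by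
      intro y hy
      obtain ⟨p, hp, hfst, hmem⟩ := pieces_mem M 0 y i hy
      rw [hkM] at hp
      refine Set.mem_iUnion.mpr ⟨⟨p, hp⟩, Set.mem_iUnion.mpr ⟨?_, ?_⟩⟩
      · rw [howner]
        simp only
        rw [List.getD_eq_getElem _ _ (by rw [hfstlen]; omega),
          ← List.getD_eq_getElem _ i (by rw [hfstlen]; omega)]
        exact hfst
      · rw [hx]
        simp only [Fin.coe_castSucc, Fin.val_succ]
        rw [List.getD_cons_succ]
        exact hmem
    have hval1 := pieces_value V (1/D) hc.le (fun i => by haveI := hprob i; exact inferInstance) L 0 i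
      hchain hgood
    have hcnt : (L.map Prod.fst).count i = A.count i := hperm.count_eq i
    have hmono2 : ((V i) (pieces 0 L i)).toReal ≤ ((V i) (piece x owner i)).toReal :=
      ENNReal.toReal_mono (measure_ne_top _ _) (measure_mono (hsub1.trans hsub2))
    apply ENNReal.ofReal_le_of_le_toReal
    by_cases hiil : i = il
    · rw [hiil] at hval1 hcnt hmono2 ⊢
      rw [htl]
      have hcA : A.count il = D - n + 1 := by
        rw [hA, List.count_append, List.count_replicate_self]
        have h0 : ((List.finRange n).filter (fun x => x ≠ il)).count il = 0 := by
          apply List.count_eq_zero.mpr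
          intro hmem
          have := List.of_mem_filter hmem
          simp at this
        rw [h0, zero_add]
      have hcast : ((D - n + 1 : ℕ) : ℝ) = (D : ℝ) - n + 1 := by
        rw [Nat.cast_add, Nat.cast_sub hD, Nat.cast_one]
      calc ((D:ℝ) - n + 1) / D = ((D - n + 1 : ℕ) : ℝ) * (1 / D) := by
            rw [hcast, mul_one_div]
        _ ≤ ((V il) (pieces 0 L il)).toReal := by rw [← hcA, ← hcnt]; exact hval1
        _ ≤ _ := hmono2
    · rw [hto i hiil]
      have hcA : A.count i = 1 := by
        rw [hA, List.count_append]
        have h1 : (List.replicate (D - n + 1) il).count i = 0 := by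
          apply List.count_eq_zero.mpr
          intro hmem
          exact hiil (List.eq_of_mem_replicate hmem)
        have h2 : ((List.finRange n).filter (fun x => x ≠ il)).count i = 1 := by
          rw [List.count_filter (by simpa using hiil)]
          exact List.count_eq_one_of_mem (List.nodup_finRange n) (List.mem_finRange i)
        rw [h1, h2]
      calc (1:ℝ) / D = ((A.count i : ℕ) : ℝ) * (1 / D) := by rw [hcA]; push_cast; ring
        _ ≤ ((V i) (pieces 0 L i)).toReal := by rw [← hcnt]; exact hval1
        _ ≤ _ := hmono2

end
end
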